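/- arXiv:2006.01544 — 3 statements merged into one kernel-verified Lean document; each statement's English description precedes it below -/
import Mathlib

section
/- Let n ≥ 3, β ≥ 1, L > 0. Define G_{β,L}(x) = (β²/(2β−1))x^{2β−1} for 0 ≤ x ≤ L and G_{β,L}(x) = β²L^{2(β−1)}x − 2β²L^{2β−1}(β−1)/(2β−1) for x > L, and H_{β,L}(x) = ∫₀ˣ G_{β,L}(y)dy. Then for all x ≥ 0: (n/2)·H_{β,L}(x) − x·G_{β,L}(x) − ((n−2)/4)·φ_{β,L}(x)² ≤ 0, where φ_{β,L}(x) = x^β for x ≤ L and φ_{β,L}(x) = βL^{β−1}(x−L) + L^β for x > L. -/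
/-- Linearized power function: `x ^ β` for `x ≤ L`, linear extension beyond `L`. -/
noncomputable def phi (β L x : ℝ) : ℝ :=
  if x ≤ L then x ^ β else β * L ^ (β-1) * (x - L) + L ^ β

/-- `G_{β,L}(x) = ∫₀ˣ φ'(y)² dy`, in closed form. -/
noncomputable def Gfun (β L x : ℝ) : ℝ :=
  if x ≤ L then β^2/(2*β-1) * x ^ (2*β-1)
  else β^2 * L ^ (2*(β-1)) * x - 2*β^2 * L ^ (2*β-1) * (β-1)/(2*β-1)

/-- `H_{β,L}(x) = ∫₀ˣ G_{β,L}(y) dy`. -/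
noncomputable def Hfun (β L x : ℝ) : ℝ := ∫ y in (0:ℝ)..x, Gfun β L y

lemma cont_rpow {r : ℝ} (hr : 0 < r) : Continuous fun y : ℝ => y ^ r :=
  continuous_iff_continuousAt.mpr fun y => Real.continuousAt_rpow_const y r (Or.inr hr.le)

lemma H_left (β L : ℝ) (hβ : 1 ≤ β) (hL : 0 < L) (x : ℝ) (hx : 0 ≤ x) (hxL : x ≤ L) :
    Hfun β L x = β^2/(2*β-1) * x ^ (2*β) / (2*β) := by
  have h1 : (0:ℝ) < 2*β - 1 := by linarith
  have hcg : ∀ y ∈ Set.uIcc (0:ℝ) x, Gfun β L y = β^2/(2*β-1) * y ^ (2*β-1) := by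
    intro y hy
    rw [Set.uIcc_of_le hx] at hy
    simp [Gfun, le_trans hy.2 hxL]
  rw [Hfun, intervalIntegral.integral_congr hcg, intervalIntegral.integral_const_mul,
    integral_rpow (Or.inl (by linarith : (-1:ℝ) < 2*β-1))]
  have h2 : 2*β - 1 + 1 = 2*β := by ring
  rw [h2, Real.zero_rpow (by linarith : (2:ℝ)*β ≠ 0)]
  ring

lemma H_right (β L : ℝ) (hβ : 1 ≤ β) (hL : 0 < L) (x : ℝ) (hxL : L ≤ x) :
    Hfun β L x = β^2/(2*β-1) * L ^ (2*β) / (2*β)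
      + β^2 * L ^ (2*(β-1)) * (x^2 - L^2)/2
      - (2*β^2 * L ^ (2*β-1) * (β-1)/(2*β-1)) * (x - L) := by
  have h1 : (0:ℝ) < 2*β - 1 := by linarith
  have hcont : Continuous fun y : ℝ => β^2/(2*β-1) * y ^ (2*β-1) :=
    continuous_const.mul (cont_rpow (by linarith))
  have eq1 : Set.EqOn (Gfun β L) (fun y => β^2/(2*β-1) * y ^ (2*β-1)) (Set.uIcc 0 L) := by
    intro y hy
    rw [Set.uIcc_of_le hL.le] at hy
    simp [Gfun, hy.2]
  have hbd : β^2/(2*β-1) * L ^ (2*β-1)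
      = β^2 * L ^ (2*(β-1)) * L - 2*β^2 * L ^ (2*β-1) * (β-1)/(2*β-1) := by
    have e : L ^ (2*(β-1)) * L = L ^ (2*β-1) := by
      have h2 : 2*(β-1) + 1 = 2*β - 1 := by ring
      calc L ^ (2*(β-1)) * L = L ^ (2*(β-1)) * L ^ (1:ℝ) := by rw [Real.rpow_one]
        _ = L ^ (2*(β-1) + 1) := (Real.rpow_add hL _ _).symm
        _ = L ^ (2*β-1) := by rw [h2]
    rw [← e]
    linear_combination (β^2 * L ^ (2*(β-1)) * L) * (mul_inv_cancel₀ h1.ne')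
  have eq2 : Set.EqOn (Gfun β L)
      (fun y => β^2 * L ^ (2*(β-1)) * y - 2*β^2 * L ^ (2*β-1) * (β-1)/(2*β-1))
      (Set.uIcc L x) := by
    intro y hy
    rw [Set.uIcc_of_le hxL] at hy
    rw [Gfun]
    split_ifs with h
    · have : y = L := le_antisymm h hy.1
      subst this
      exact hbd
    · rfl
  have i1 : IntervalIntegrable (Gfun β L) MeasureTheory.volume 0 L :=
    (hcont.continuousOn.congr eq1).intervalIntegrable
  have i2 : IntervalIntegrable (Gfun β L) MeasureTheory.volume L x :=
    (((continuous_const.mul continuous_id).sub continuous_const).continuousOn.congr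
      eq2).intervalIntegrable
  rw [Hfun, ← intervalIntegral.integral_add_adjacent_intervals i1 i2]
  have hfirst : (∫ y in (0:ℝ)..L, Gfun β L y) = β^2/(2*β-1) * L ^ (2*β) / (2*β) :=
    H_left β L hβ hL L hL.le le_rfl
  rw [hfirst, intervalIntegral.integral_congr eq2]
  have : (∫ y in L..x, (β^2 * L ^ (2*(β-1)) * y - 2*β^2 * L ^ (2*β-1) * (β-1)/(2*β-1)))
      = β^2 * L ^ (2*(β-1)) * (x^2 - L^2)/2
        - (2*β^2 * L ^ (2*β-1) * (β-1)/(2*β-1)) * (x - L) := by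
    rw [intervalIntegral.integral_sub (f := fun y => β^2 * L ^ (2*(β-1)) * y)
      ((continuous_const.mul continuous_id').intervalIntegrable _ _)
      (intervalIntegrable_const),
      intervalIntegral.integral_const_mul, integral_id,
      intervalIntegral.integral_const, smul_eq_mul]
    ring
  rw [this]
  ring

theorem stmt1 (n : ℕ) (hn : 3 ≤ n) (β L : ℝ) (hβ : 1 ≤ β) (hL : 0 < L)
    (x : ℝ) (hx : 0 ≤ x) :
    (n/2 : ℝ) * Hfun β L x - x * Gfun β L x - ((n:ℝ)-2)/4 * (phi β L x)^2 ≤ 0 := by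
  have hn3 : (3:ℝ) ≤ (n:ℝ) := by exact_mod_cast hn
  have h1 : (0:ℝ) < 2*β - 1 := by linarith
  have hβ0 : (0:ℝ) < β := by linarith
  by_cases hxL : x ≤ L
  · -- x ≤ L
    rcases eq_or_lt_of_le hx with h0 | h0
    · -- x = 0
      rw [← h0]
      simp [Hfun, Gfun, phi, intervalIntegral.integral_same,
        Real.zero_rpow (by linarith : β ≠ 0), le_trans hx hxL]
    · rw [H_left β L hβ hL x hx hxL]
      simp only [Gfun, phi, if_pos hxL]
      have e1 : x * x ^ (2*β-1) = x ^ (2*β) := by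
        have h := Real.rpow_add h0 1 (2*β-1)
        rw [Real.rpow_one] at h
        rw [show (1:ℝ) + (2*β-1) = 2*β from by ring] at h
        exact h.symm
      have e2 : (x ^ β)^2 = x ^ (2*β) := by
        have h := Real.rpow_add h0 β β
        rw [show β + β = 2*β from by ring] at h
        rw [h, sq]
      rw [show x * (β^2/(2*β-1) * x ^ (2*β-1)) = β^2/(2*β-1) * (x * x ^ (2*β-1)) from by
        ring, e1, e2]
      have hX : (0:ℝ) ≤ x ^ (2*β) := Real.rpow_nonneg hx _
      have hnum : β*(n:ℝ) - 4*β^2 - ((n:ℝ)-2)*(2*β-1) ≤ 0 := by nlinarith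
      have identity : (n:ℝ)/2 * (β^2/(2*β-1) * x ^ (2*β) / (2*β)) - β^2/(2*β-1) * x ^ (2*β)
          - ((n:ℝ)-2)/4 * x ^ (2*β)
          = x ^ (2*β) * (β*(n:ℝ) - 4*β^2 - ((n:ℝ)-2)*(2*β-1)) / (4*(2*β-1)) := by
        field_simp
        ring
      rw [identity]
      exact div_nonpos_of_nonpos_of_nonneg
        (mul_nonpos_of_nonneg_of_nonpos hX hnum) (by linarith)
  · -- L < x
    push_neg at hxL
    rw [H_right β L hβ hL x hxL.le]
    simp only [Gfun, phi, if_neg (not_le.mpr hxL)]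
    have eb : L ^ β = L ^ (β-1) * L := by
      have h := Real.rpow_add hL (β-1) 1
      rw [Real.rpow_one, show β - 1 + 1 = β from by ring] at h
      exact h
    have e2 : L ^ (2*(β-1)) = L ^ (β-1) * L ^ (β-1) := by
      have h := Real.rpow_add hL (β-1) (β-1)
      rw [show β - 1 + (β-1) = 2*(β-1) from by ring] at h
      exact h
    have e3 : L ^ (2*β-1) = L ^ (β-1) * L ^ (β-1) * L := by
      have h := Real.rpow_add hL (2*(β-1)) 1
      rw [Real.rpow_one, show 2*(β-1) + 1 = 2*β - 1 from by ring, e2] at h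
      exact h
    have e4 : L ^ (2*β) = L ^ (β-1) * L ^ (β-1) * L * L := by
      have h := Real.rpow_add hL (2*β-1) 1
      rw [Real.rpow_one, show 2*β - 1 + 1 = 2*β from by ring, e3] at h
      exact h
    rw [eb, e2, e3, e4]
    set v := L ^ (β-1) with hv
    have hvpos : (0:ℝ) < v := Real.rpow_pos_of_pos hL _
    have ht : (0:ℝ) ≤ x - L := by linarith
    have k1 : (0:ℝ) ≤ 4*β^2 + ((n:ℝ)-4)*β - ((n:ℝ)-2) := by nlinarith
    have k2 : (0:ℝ) ≤ ((n:ℝ)-2)*(2*β-1) + 4*β^2 - β*(n:ℝ) := by nlinarith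
    have identity : (n:ℝ)/2 * (β^2/(2*β-1) * (v * v * L * L) / (2*β)
          + β^2 * (v * v) * (x^2 - L^2)/2
          - (2*β^2 * (v * v * L) * (β-1)/(2*β-1)) * (x - L))
        - x * (β^2 * (v * v) * x - 2*β^2 * (v * v * L) * (β-1)/(2*β-1))
        - ((n:ℝ)-2)/4 * (β * v * (x - L) + v * L)^2
        = -(2*(2*β-1)*v^2*β^2*(x-L)^2
            + 2*v^2*L*β*(4*β^2 + ((n:ℝ)-4)*β - ((n:ℝ)-2))*(x-L)
            + v^2*L^2*(((n:ℝ)-2)*(2*β-1) + 4*β^2 - β*(n:ℝ))) / (4*(2*β-1)) := by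
      field_simp
      ring
    rw [identity]
    apply div_nonpos_of_nonpos_of_nonneg _ (by linarith)
    have t1 : (0:ℝ) ≤ 2*(2*β-1)*v^2*β^2*(x-L)^2 := by positivity
    have t2 : (0:ℝ) ≤ 2*v^2*L*β*(4*β^2 + ((n:ℝ)-4)*β - ((n:ℝ)-2))*(x-L) :=
      mul_nonneg (mul_nonneg (by positivity) k1) ht
    have t3 : (0:ℝ) ≤ v^2*L^2*(((n:ℝ)-2)*(2*β-1) + 4*β^2 - β*(n:ℝ)) :=
      mul_nonneg (by positivity) k2
    linarith
end

section
/- Let n ≥ 4, β = n/4, L > 0. With G_{β,L} and H_{β,L} as before (G_{β,L}(x) = (β²/(2β−1))x^{2β−1} for x ≤ L, linear beyond L; H_{β,L} its antiderivative), one has x·G_{β,L}(x) − (n/2)·H_{β,L}(x) ≤ 0 for all x ≥ 0. In particular for x > L this expression equals −β²(β−1)L^{2β}(x/L − 1)² ≤ 0. -/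
lemma Lpow1 (β L : ℝ) (hL : 0 < L) : L ^ (2*(β-1)) * L = L ^ (2*β-1) := by
  rw [← Real.rpow_add_one hL.ne']; ring_nf

lemma Lpow2 (β L : ℝ) (hL : 0 < L) : L ^ (2*β-1) * L = L ^ (2*β) := by
  rw [← Real.rpow_add_one hL.ne']; norm_num

lemma Gcont (β L : ℝ) (hβ : 1 ≤ β) (hL : 0 < L) : Continuous (Gfun β L) := by
  have h1 : (0:ℝ) ≤ 2*β - 1 := by linarith
  apply Continuous.if_le
  · exact continuous_const.mul (Real.continuous_rpow_const h1)
  · fun_prop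
  · exact continuous_id
  · exact continuous_const
  · rintro x rfl
    have h2 : (2*β-1) ≠ 0 := by nlinarith
    field_simp
    rw [Lpow1 β x hL, mul_comm β 2]; field_simp; ring

lemma Gfun_ge (β L : ℝ) (hβ : 1 ≤ β) (hL : 0 < L) (y : ℝ) (hy : L ≤ y) :
    Gfun β L y = β^2 * L ^ (2*(β-1)) * y - 2*β^2 * L ^ (2*β-1) * (β-1)/(2*β-1) := by
  have h2 : (2*β-1) ≠ 0 := by nlinarith
  unfold Gfun
  split_ifs with h
  · have : y = L := le_antisymm h hy
    subst this
    field_simp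
    rw [Lpow1 β y hL, mul_comm β 2]; field_simp; ring
  · rfl

lemma H_le (β L : ℝ) (hβ : 1 ≤ β) (hL : 0 < L) (x : ℝ) (hx0 : 0 ≤ x) (hx : x ≤ L) :
    Hfun β L x = β^2/((2*β-1)*(2*β)) * x ^ (2*β) := by
  have h1 : (-1:ℝ) < 2*β-1 := by linarith
  have heq : Set.EqOn (Gfun β L) (fun y => β^2/(2*β-1) * y ^ (2*β-1)) (Set.uIcc 0 x) := by
    intro y hy
    rw [Set.uIcc_of_le hx0] at hy
    have : y ≤ L := le_trans hy.2 hx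
    simp [Gfun, this]
  rw [Hfun, intervalIntegral.integral_congr heq, intervalIntegral.integral_const_mul,
    integral_rpow (Or.inl h1)]
  have h0 : (0:ℝ) ^ (2*β-1+1) = 0 := Real.zero_rpow (by nlinarith)
  rw [h0, show (2*β-1+1) = 2*β by ring]
  have h2 : (2*β-1) ≠ 0 := by nlinarith
  have h3 : (2*β) ≠ 0 := by nlinarith
  field_simp
  ring

lemma H_ge (β L : ℝ) (hβ : 1 ≤ β) (hL : 0 < L) (x : ℝ) (hx : L ≤ x) :
    Hfun β L x = β^2/((2*β-1)*(2*β)) * L ^ (2*β)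
      + β^2 * L ^ (2*(β-1)) * ((x^2 - L^2)/2)
      - (2*β^2 * L ^ (2*β-1) * (β-1)/(2*β-1)) * (x - L) := by
  have hint : ∀ a b : ℝ, IntervalIntegrable (Gfun β L) MeasureTheory.volume a b :=
    fun a b => (Gcont β L hβ hL).intervalIntegrable a b
  have hsplit : Hfun β L x = Hfun β L L + ∫ y in L..x, Gfun β L y := by
    rw [Hfun, Hfun, intervalIntegral.integral_add_adjacent_intervals (hint 0 L) (hint L x)]
  rw [hsplit, H_le β L hβ hL L hL.le le_rfl]
  have heq : Set.EqOn (Gfun β L)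
      (fun y => β^2 * L ^ (2*(β-1)) * y - 2*β^2 * L ^ (2*β-1) * (β-1)/(2*β-1))
      (Set.uIcc L x) := by
    intro y hy
    rw [Set.uIcc_of_le hx] at hy
    exact Gfun_ge β L hβ hL y hy.1
  rw [intervalIntegral.integral_congr heq]
  rw [intervalIntegral.integral_sub (f := fun y => β ^ 2 * L ^ (2*(β-1)) * y) ((continuous_const.mul continuous_id' :
        Continuous fun y : ℝ => β ^ 2 * L ^ (2*(β-1)) * y).intervalIntegrable _ _)
      (continuous_const.intervalIntegrable _ _),
    intervalIntegral.integral_const_mul, integral_id,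
    intervalIntegral.integral_const]
  simp only [smul_eq_mul]
  ring

theorem stmt2 (n : ℕ) (hn : 4 ≤ n) (β L : ℝ) (hβ : β = (n:ℝ)/4) (hL : 0 < L) :
    (∀ x : ℝ, 0 ≤ x → x * Gfun β L x - (n/2 : ℝ) * Hfun β L x ≤ 0) ∧
    (∀ x : ℝ, L < x →
      x * Gfun β L x - (n/2 : ℝ) * Hfun β L x
        = -(β^2 * (β-1) * L ^ (2*β) * (x/L - 1)^2)) := by
  have hn4 : (4:ℝ) ≤ (n:ℝ) := by exact_mod_cast hn
  have hβ1 : 1 ≤ β := by rw [hβ]; linarith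
  have hn2 : (n/2 : ℝ) = 2*β := by rw [hβ]; ring
  have h2 : (2*β-1) ≠ 0 := by nlinarith
  have h3 : (2*β) ≠ 0 := by nlinarith
  have key : ∀ x : ℝ, L < x →
      x * Gfun β L x - (n/2 : ℝ) * Hfun β L x
        = -(β^2 * (β-1) * L ^ (2*β) * (x/L - 1)^2) := by
    intro x hx
    rw [hn2, Gfun_ge β L hβ1 hL x hx.le, H_ge β L hβ1 hL x hx.le]
    have e1 : L ^ (2*(β-1)) = L ^ (2*β-1) / L := by
      rw [← Lpow1 β L hL]; field_simp
    have e2 : L ^ (2*β) = L ^ (2*β-1) * L := (Lpow2 β L hL).symm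
    rw [e1, e2]
    field_simp
    field_simp
    ring
  refine ⟨fun x hx0 => ?_, key⟩
  rcases le_or_gt x L with hxL | hxL
  · -- expression is 0
    have hG : Gfun β L x = β^2/(2*β-1) * x ^ (2*β-1) := by simp [Gfun, hxL]
    rw [hn2, hG, H_le β L hβ1 hL x hx0 hxL]
    rcases eq_or_lt_of_le hx0 with h0 | h0
    · rw [← h0]
      rw [Real.zero_rpow (by nlinarith : 2*β ≠ 0)]
      ring_nf
      simp
    · have ex : x ^ (2*β) = x ^ (2*β-1) * x := by
        rw [← Real.rpow_add_one h0.ne']; norm_num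
      rw [ex]
      apply le_of_eq
      field_simp
      ring
  · rw [key x hxL]
    have hfac : 0 ≤ β^2 * (β-1) * L ^ (2*β) * (x/L - 1)^2 := by
      have h5 : (0:ℝ) ≤ L ^ (2*β) := (Real.rpow_pos_of_pos hL _).le
      exact mul_nonneg (mul_nonneg (mul_nonneg (sq_nonneg β) (by linarith)) h5) (sq_nonneg _)
    linarith
end

section
/- For all β ≥ 1, L > 0 and x ≥ 0, the inequalities 12β·H_{β,L}(x) ≥ φ_{β,L}(x)² and 4β·H_{β,L}(x) ≥ x·G_{β,L}(x) hold. -/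
set_option maxHeartbeats 2000000 in
theorem stmt3 (β L : ℝ) (hβ : 1 ≤ β) (hL : 0 < L) (x : ℝ) (hx : 0 ≤ x) :
    12 * β * Hfun β L x ≥ (phi β L x)^2 ∧
    4 * β * Hfun β L x ≥ x * Gfun β L x := by
  have hβ0 : (0:ℝ) < β := by linarith
  have h2b : (1:ℝ) ≤ 2*β - 1 := by linarith
  have h2b0 : (2*β - 1) ≠ 0 := by linarith
  have h2b0' : (0:ℝ) < 2*β - 1 := by linarith
  have h2b0'' : β*2 - 1 ≠ 0 := by linarith
  set A := L ^ β with hA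
  have hApos : 0 < A := Real.rpow_pos_of_pos hL β
  have hL1 : L ^ (β - 1) = A / L := by
    rw [eq_div_iff hL.ne', ← Real.rpow_add_one hL.ne', show β - 1 + 1 = β by ring]
  have hL4 : L ^ (2*β) = A^2 := by
    rw [show 2*β = β + β by ring, Real.rpow_add hL, ← hA]; ring
  have hL2 : L ^ (2*β - 1) = A^2 / L := by
    rw [eq_div_iff hL.ne', ← Real.rpow_add_one hL.ne', show 2*β - 1 + 1 = 2*β by ring, hL4]
  have hL3 : L ^ (2*(β-1)) = A^2 / L^2 := by
    rw [eq_div_iff (pow_ne_zero 2 hL.ne'), show (2:ℝ)*(β-1) = (β-1) + (β-1) by ring,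
      Real.rpow_add hL, hL1]
    field_simp
  -- continuity of Gfun
  have hrpc : Continuous fun y : ℝ => y ^ (2*β - 1) :=
    continuous_iff_continuousAt.mpr fun y =>
      Real.continuousAt_rpow_const y _ (Or.inr (by linarith))
  have hmatch : β^2/(2*β-1) * L ^ (2*β-1)
      = β^2 * L ^ (2*(β-1)) * L - 2*β^2 * L ^ (2*β-1) * (β-1)/(2*β-1) := by
    rw [hL2, hL3]
    field_simp
    ring
  have hGcont : Continuous (Gfun β L) := by
    unfold Gfun
    apply Continuous.if_le (continuous_const.mul hrpc) (by fun_prop) continuous_id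
      continuous_const
    intro y hy
    subst hy
    exact hmatch
  have hGint : ∀ a b : ℝ, IntervalIntegrable (Gfun β L) MeasureTheory.volume a b :=
    fun a b => hGcont.intervalIntegrable a b
  have hrpow_int : ∀ b : ℝ, (∫ y in (0:ℝ)..b, y ^ (2*β-1)) = b ^ (2*β) / (2*β) := by
    intro b
    rw [integral_rpow (Or.inl (by linarith)), show 2*β - 1 + 1 = 2*β by ring,
      Real.zero_rpow (by linarith : 2*β ≠ 0)]
    ring
  rcases le_or_gt x L with hxle | hxgt
  · -- case x ≤ L
    have hH : Hfun β L x = β^2/(2*β-1) * (x ^ (2*β) / (2*β)) := by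
      unfold Hfun
      rw [intervalIntegral.integral_congr
        (g := fun y => β^2/(2*β-1) * y ^ (2*β-1))
        (fun y hy => by
          rw [Set.uIcc_of_le hx] at hy
          simp only [Gfun, if_pos (hy.2.trans hxle)]),
        intervalIntegral.integral_const_mul, hrpow_int]
    have hphi : phi β L x = x ^ β := if_pos hxle
    have hG : Gfun β L x = β^2/(2*β-1) * x ^ (2*β-1) := if_pos hxle
    rcases eq_or_lt_of_le hx with h0 | h0
    · -- x = 0
      rw [hH, hphi, hG, ← h0, Real.zero_rpow (by linarith : β ≠ 0),
        Real.zero_rpow (by linarith : 2*β ≠ 0), Real.zero_rpow (by linarith : 2*β - 1 ≠ 0)]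
      norm_num
    · set B := x ^ β with hB
      have hBpos : 0 < B := Real.rpow_pos_of_pos h0 β
      have hx4 : x ^ (2*β) = B^2 := by
        rw [show 2*β = β + β by ring, Real.rpow_add h0, ← hB]; ring
      have hx2 : x ^ (2*β - 1) = B^2 / x := by
        rw [eq_div_iff h0.ne', ← Real.rpow_add_one h0.ne', show 2*β - 1 + 1 = 2*β by ring, hx4]
      constructor
      · rw [ge_iff_le, ← sub_nonneg, hH, hphi, hx4,
          show 12*β*(β^2/(2*β-1)*(B^2/(2*β))) - B^2
            = (B^2 * (6*β^2 - 2*β + 1)) / (2*β - 1) by field_simp; ring]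
        apply div_nonneg _ (by linarith)
        nlinarith [sq_nonneg B, sq_nonneg (β - 1)]
      · rw [ge_iff_le, ← sub_nonneg, hH, hG, hx4, hx2]
        have : 4*β*(β^2/(2*β-1)*(B^2/(2*β))) - x * (β^2/(2*β-1) * (B^2/x))
            = (β^2 * B^2) / (2*β - 1) := by field_simp; ring
        rw [this]
        positivity
  · -- case L < x
    have hxLle : L ≤ x := hxgt.le
    have ht : 0 ≤ x - L := by linarith
    have hH : Hfun β L x = β^2/(2*β-1) * (L ^ (2*β) / (2*β))
        + (β^2 * L ^ (2*(β-1)) * ((x^2 - L^2)/2)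
          - 2*β^2 * L ^ (2*β-1) * (β-1)/(2*β-1) * (x - L)) := by
      unfold Hfun
      rw [← intervalIntegral.integral_add_adjacent_intervals (hGint 0 L) (hGint L x)]
      congr 1
      · rw [intervalIntegral.integral_congr
          (g := fun y => β^2/(2*β-1) * y ^ (2*β-1))
          (fun y hy => by
            rw [Set.uIcc_of_le hL.le] at hy
            simp only [Gfun, if_pos hy.2]),
          intervalIntegral.integral_const_mul, hrpow_int]
      · rw [intervalIntegral.integral_congr
          (g := fun y => β^2 * L ^ (2*(β-1)) * y - 2*β^2 * L ^ (2*β-1) * (β-1)/(2*β-1))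
          (fun y hy => by
            rw [Set.uIcc_of_le hxLle] at hy
            by_cases h : y ≤ L
            · have : y = L := le_antisymm h hy.1
              subst this
              simp only [Gfun, if_pos le_rfl]
              exact hmatch
            · simp only [Gfun, if_neg h])]
        rw [intervalIntegral.integral_sub (f := fun y => β^2 * L ^ (2*(β-1)) * y)
            (((continuous_const.mul continuous_id') :
              Continuous fun y : ℝ => β^2 * L ^ (2*(β-1)) * y).intervalIntegrable _ _)
            (intervalIntegrable_const),
          intervalIntegral.integral_const_mul, integral_id,
          intervalIntegral.integral_const, smul_eq_mul]
        ring
    have hphi : phi β L x = β * (A/L) * (x - L) + A := by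
      rw [phi, if_neg (not_le.mpr hxgt), hL1]
    have hG : Gfun β L x = β^2 * (A^2/L^2) * x - 2*β^2 * (A^2/L) * (β-1)/(2*β-1) := by
      rw [Gfun, if_neg (not_le.mpr hxgt), hL2, hL3]
    rw [hL2, hL3, hL4] at hH
    constructor
    · rw [ge_iff_le, ← sub_nonneg, hH, hphi]
      have e1 : 12*β*(β^2/(2*β-1)*(A^2/(2*β))
            + (β^2 * (A^2/L^2) * ((x^2 - L^2)/2)
              - 2*β^2 * (A^2/L) * (β-1)/(2*β-1) * (x - L)))
          - (β * (A/L) * (x - L) + A)^2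
          = ((β^2*(2*β-1)*(6*β-1)*(x-L)^2 + 2*β*(6*β^2-2*β+1)*L*(x-L)
              + (6*β^2-2*β+1)*L^2) * A^2) / ((2*β-1)*L^2) := by
        field_simp
        ring
      rw [e1]
      apply div_nonneg _ (by positivity)
      have c1 : 0 ≤ β^2*(2*β-1)*(6*β-1)*(x-L)^2 := by
        apply mul_nonneg _ (sq_nonneg _)
        apply mul_nonneg (mul_nonneg (sq_nonneg _) (by linarith)) (by linarith)
      have c2 : 0 ≤ 2*β*(6*β^2-2*β+1)*L*(x-L) := by
        apply mul_nonneg _ ht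
        apply mul_nonneg (mul_nonneg (by linarith) (by nlinarith)) hL.le
      have c3 : 0 ≤ (6*β^2-2*β+1)*L^2 := by
        apply mul_nonneg (by nlinarith) (sq_nonneg _)
      nlinarith [sq_nonneg A]
    · rw [ge_iff_le, ← sub_nonneg, hH, hG]
      have e2 : 4*β*(β^2/(2*β-1)*(A^2/(2*β))
            + (β^2 * (A^2/L^2) * ((x^2 - L^2)/2)
              - 2*β^2 * (A^2/L) * (β-1)/(2*β-1) * (x - L)))
          - x * (β^2 * (A^2/L^2) * x - 2*β^2 * (A^2/L) * (β-1)/(2*β-1))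
          = ((β^2*(2*β-1)^2*(x-L)^2 + 2*β^3*L*(x-L) + β^2*L^2) * A^2)
            / ((2*β-1)*L^2) := by
        field_simp
        ring
      rw [e2]
      apply div_nonneg _ (by positivity)
      have c1 : 0 ≤ β^2*(2*β-1)^2*(x-L)^2 := by positivity
      have c2 : 0 ≤ 2*β^3*L*(x-L) := by
        apply mul_nonneg (mul_nonneg (by positivity) hL.le) ht
      have c3 : (0:ℝ) ≤ β^2*L^2 := by positivity
      exact mul_nonneg (by linarith) (sq_nonneg A)
end
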